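/- Let V : [0, ∞) → R_{≥0} be differentiable with V(0) = V_0 > 0, and suppose V'(t) ≤ −γ·(M·V(t)^m + N·V(t)^{n'})^k whenever V(t) > 0, where γ = Γ((1−km)/(n'−m))·Γ((kn'−1)/(n'−m)) / (T_s·M^k·Γ(k)·(n'−m)) · (M/N)^{(1−km)/(n'−m)}, with M, N, m, n', k > 0, k·m < 1, k·n' > 1, and T_s > 0. Then V(t) = 0 for all t ≥ T_s. -/

import Mathlib

open Real

open MeasureTheory Set

lemma real_beta (a b : ℝ) (ha : 0 < a) (hb : 0 < b) :
    Gamma a * Gamma b = Gamma (a + b) * ∫ x in (0:ℝ)..1, x ^ (a-1) * (1-x) ^ (b-1) := by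
  have h := Complex.Gamma_mul_Gamma_eq_betaIntegral (s := (a:ℂ)) (t := (b:ℂ))
    (by simpa using ha) (by simpa using hb)
  have hbeta : Complex.betaIntegral (a:ℂ) (b:ℂ)
      = ((∫ x in (0:ℝ)..1, x ^ (a-1) * (1-x) ^ (b-1) : ℝ) : ℂ) := by
    rw [Complex.betaIntegral, ← intervalIntegral.integral_ofReal]
    refine intervalIntegral.integral_congr fun x hx => ?_
    rw [uIcc_of_le (by norm_num)] at hx
    have hx0 : (0:ℝ) ≤ x := hx.1
    have hx1 : (0:ℝ) ≤ 1 - x := by linarith [hx.2]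
    push_cast
    rw [show (a:ℂ) - 1 = ((a - 1 : ℝ) : ℂ) by push_cast; ring,
      show (b:ℂ) - 1 = ((b - 1 : ℝ) : ℂ) by push_cast; ring,
      show ((1:ℂ) - (x:ℝ)) = (((1 - x : ℝ)) : ℂ) by push_cast; ring,
      ← Complex.ofReal_cpow hx0, ← Complex.ofReal_cpow hx1]
  rw [hbeta, ← Complex.ofReal_add, Complex.Gamma_ofReal, Complex.Gamma_ofReal,
    Complex.Gamma_ofReal, ← Complex.ofReal_mul, ← Complex.ofReal_mul] at h
  exact_mod_cast h

lemma beta_Ioi (a b : ℝ) (ha : 0 < a) (hb : 0 < b) :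
    ∫ t in Ioi (0:ℝ), t ^ (a-1) * (1+t) ^ (-(a+b))
      = ∫ x in (0:ℝ)..1, x ^ (a-1) * (1-x) ^ (b-1) := by
  have hs : MeasurableSet (Ioo (0:ℝ) 1) := measurableSet_Ioo
  set f : ℝ → ℝ := fun x => x / (1 - x) with hf
  have himg : f '' Ioo (0:ℝ) 1 = Ioi (0:ℝ) := by
    ext t
    constructor
    · rintro ⟨x, hx, rfl⟩
      exact div_pos hx.1 (by linarith [hx.2])
    · intro ht
      refine ⟨t / (1 + t), ⟨div_pos ht (by linarith [mem_Ioi.mp ht]), ?_⟩, ?_⟩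
      · rw [div_lt_one (by linarith [mem_Ioi.mp ht])]; linarith [mem_Ioi.mp ht]
      · have h1 : (0:ℝ) < 1 + t := by linarith [mem_Ioi.mp ht]
        have h2 : 1 - t/(1+t) = 1/(1+t) := by field_simp; ring
        simp only [hf]
        rw [h2]
        field_simp
  have hderiv : ∀ x ∈ Ioo (0:ℝ) 1, HasDerivWithinAt f (((1-x)^2)⁻¹) (Ioo (0:ℝ) 1) x := by
    intro x hx
    have h1 : (1:ℝ) - x ≠ 0 := by intro h; rw [sub_eq_zero] at h; linarith [hx.2]
    have : HasDerivAt f (((1 - x) * 1 - x * (-1)) / (1-x)^2) x := by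
      have hd := (hasDerivAt_id' x).fun_div ((hasDerivAt_const x 1).sub (hasDerivAt_id' x)) h1
      simp only [hf]
      exact hd.congr_deriv (by show (1 * (1 - x) - x * (0 - 1)) / (1 - x) ^ 2 = ((1 - x) * 1 - x * -1) / (1 - x) ^ 2; ring)
    exact (this.congr_deriv (by ring)).hasDerivWithinAt
  have hinj : InjOn f (Ioo (0:ℝ) 1) := by
    intro x hx y hy hxy
    have h1 : (1:ℝ) - x ≠ 0 := by intro h; rw [sub_eq_zero] at h; linarith [hx.2]
    have h2 : (1:ℝ) - y ≠ 0 := by intro h; rw [sub_eq_zero] at h; linarith [hy.2]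
    simp only [hf] at hxy
    field_simp at hxy
    nlinarith [hxy]
  have key := integral_image_eq_integral_abs_deriv_smul hs hderiv hinj
    (fun t => t ^ (a-1) * (1+t) ^ (-(a+b)))
  rw [himg] at key
  rw [key, intervalIntegral.integral_of_le (by norm_num : (0:ℝ) ≤ 1),
    MeasureTheory.integral_Ioc_eq_integral_Ioo]
  refine setIntegral_congr_fun hs fun x hx => ?_
  have hx0 : (0:ℝ) < x := hx.1
  have hx1 : (0:ℝ) < 1 - x := by linarith [hx.2]
  have h1 : 1 + f x = (1 - x)⁻¹ := by
    simp only [hf]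
    field_simp
    ring
  have h2 : f x ^ (a-1) = x ^ (a-1) * (1-x) ^ (1-a) := by
    rw [hf]
    simp only
    rw [div_rpow hx0.le hx1.le, div_eq_mul_inv, ← rpow_neg hx1.le]
    ring_nf
  rw [smul_eq_mul, h1, h2, ← rpow_natCast (1-x) 2, ← rpow_neg hx1.le, abs_of_pos (by positivity),
    inv_rpow hx1.le, ← rpow_neg hx1.le]
  rw [show (-(((2:ℕ):ℝ))) = (-2 : ℝ) by norm_num]
  rw [show (1-x) ^ (-2:ℝ) * (x ^ (a-1) * (1-x) ^ (1-a) * (1-x) ^ (-(-(a+b)))) =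
      x ^ (a-1) * ((1-x) ^ (-2:ℝ) * ((1-x) ^ (1-a) * (1-x) ^ (-(-(a+b))))) from by ring,
    ← rpow_add hx1, ← rpow_add hx1]
  norm_num
  ring_nf
  exact Or.inl trivial

lemma main_integral (M N m n' k : ℝ) (hM : 0 < M) (hN : 0 < N) (hm : 0 < m)
    (hn' : 0 < n') (hk : 0 < k) (hkm : k * m < 1) (hkn : 1 < k * n') :
    ∫ z in Ioi (0:ℝ), ((M * z ^ m + N * z ^ n') ^ k)⁻¹
      = Gamma ((1-k*m)/(n'-m)) * Gamma ((k*n'-1)/(n'-m)) / (M ^ k * Gamma k * (n'-m))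
        * (M/N) ^ ((1-k*m)/(n'-m)) := by
  have hp : 0 < n' - m := by
    have h1 : m < 1/k := by rw [lt_div_iff₀ hk]; linarith [mul_comm k m]
    have h2 : 1/k < n' := by rw [div_lt_iff₀ hk]; linarith [mul_comm k n']
    linarith
  set p := n' - m with hpdef
  set a := (1 - k*m)/p with hadef
  have ha : 0 < a := div_pos (by linarith) hp
  have hka : k - a = (k*n' - 1)/p := by
    rw [hadef, hpdef]
    have hp2 : n' - m ≠ 0 := hp.ne'
    field_simp
    ring
  have hb : 0 < k - a := by rw [hka]; exact div_pos (by linarith) hp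
  set g : ℝ → ℝ := fun u => u ^ (a-1) * (M + N * u) ^ (-k) with hgdef
  -- Step A : substitution u = z ^ p
  have stepA : ∫ z in Ioi (0:ℝ), ((M * z ^ m + N * z ^ n') ^ k)⁻¹
      = p⁻¹ * ∫ z in Ioi (0:ℝ), (|p| * z ^ (p - 1)) • g (z ^ p) := by
    rw [← integral_const_mul]
    refine setIntegral_congr_fun measurableSet_Ioi fun z hz => ?_
    have hz : (0:ℝ) < z := hz
    have hC : 0 < M + N * z ^ p := by positivity
    have e1 : M * z ^ m + N * z ^ n' = z ^ m * (M + N * z ^ p) := by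
      rw [mul_add, ← mul_assoc, mul_comm (z ^ m) N, mul_assoc, ← rpow_add hz]
      rw [hpdef]
      ring_nf
    have e2 : (M * z ^ m + N * z ^ n') ^ k = z ^ (m*k) * (M + N * z ^ p) ^ k := by
      rw [e1, mul_rpow (rpow_nonneg hz.le m) hC.le, ← rpow_mul hz.le]
    rw [e2, mul_inv, ← rpow_neg hz.le, ← rpow_neg hC.le, smul_eq_mul, hgdef]
    simp only
    rw [abs_of_pos hp, ← rpow_mul hz.le]
    have e3 : z ^ (p - 1) * z ^ (p * (a-1)) = z ^ (-(m*k)) := by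
      rw [← rpow_add hz]
      congr 1
      rw [hadef]
      field_simp
      ring
    calc z ^ (-(m*k)) * (M + N * z ^ p) ^ (-k)
        = (p⁻¹ * p) * (z ^ (p-1) * z ^ (p*(a-1))) * (M + N * z ^ p) ^ (-k) := by
          rw [inv_mul_cancel₀ hp.ne', e3]; ring
      _ = p⁻¹ * (p * z ^ (p-1) * (z ^ (p*(a-1)) * (M + N * z ^ p) ^ (-k))) := by ring
  have hMN : 0 < M/N := div_pos hM hN
  have stepB := integral_comp_mul_left_Ioi g 0 hMN
  rw [mul_zero] at stepB
  have stepB' : ∫ x in Ioi (0:ℝ), g x = (M/N) • ∫ x in Ioi (0:ℝ), g ((M/N)*x) := by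
    rw [stepB, smul_smul, mul_inv_cancel₀ hMN.ne', one_smul]
  have stepC : ∫ x in Ioi (0:ℝ), g ((M/N)*x)
      = (M/N) ^ (a-1) * M ^ (-k) * ∫ x in Ioi (0:ℝ), x ^ (a-1) * (1+x) ^ (-(a+(k-a))) := by
    rw [← integral_const_mul]
    refine setIntegral_congr_fun measurableSet_Ioi fun x hx => ?_
    have hx : (0:ℝ) < x := hx
    have e4 : M + N * (M/N*x) = M * (1+x) := by field_simp
    rw [hgdef]
    simp only
    rw [e4, mul_rpow hMN.le hx.le, mul_rpow hM.le (by linarith : (0:ℝ) ≤ 1+x),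
      show -(a+(k-a)) = -k by ring]
    ring
  have hGk : 0 < Gamma k := Gamma_pos_of_pos hk
  have stepD : ∫ x in Ioi (0:ℝ), x ^ (a-1) * (1+x) ^ (-(a+(k-a)))
      = Gamma a * Gamma (k-a) / Gamma k := by
    rw [beta_Ioi a (k-a) ha hb, eq_div_iff hGk.ne', mul_comm]
    nth_rewrite 1 [show (k:ℝ) = a + (k-a) by ring]
    exact (real_beta a (k-a) ha hb).symm
  rw [stepA, integral_comp_rpow_Ioi g hp.ne', stepB', stepC, stepD, ← hka, smul_eq_mul]
  rw [show (M/N) * ((M/N) ^ (a-1) * M ^ (-k) * (Gamma a * Gamma (k-a) / Gamma k))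
      = ((M/N) ^ (1:ℝ) * (M/N) ^ (a-1)) * (M ^ (-k) * (Gamma a * Gamma (k-a) / Gamma k)) from by
    rw [rpow_one]; ring]
  rw [← rpow_add hMN, show (1:ℝ) + (a-1) = a by ring, rpow_neg hM.le]
  field_simp

/-- Predefined-time stability with the explicit Gamma-function gain (Lemma 3 of the paper):
if V̇ ≤ −γ·(M V^m + N V^{n'})^k with the stated γ, then V settles to zero within T_s. -/
theorem predefined_time_explicit_gain (T_s : ℝ) (hT : 0 < T_s)
    (M N m n' k : ℝ) (hM : 0 < M) (hN : 0 < N) (hm : 0 < m) (hn' : 0 < n') (hk : 0 < k)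
    (hkm : k * m < 1) (hkn : 1 < k * n')
    (γ : ℝ)
    (hγ : γ = Real.Gamma ((1 - k * m) / (n' - m)) * Real.Gamma ((k * n' - 1) / (n' - m)) /
        (T_s * M ^ k * Real.Gamma k * (n' - m)) * (M / N) ^ ((1 - k * m) / (n' - m)))
    (V : ℝ → ℝ) (hVnn : ∀ t, 0 ≤ V t) (hV0 : 0 < V 0) (hdiff : Differentiable ℝ V)
    (hineq : ∀ t, 0 ≤ t → 0 < V t →
      deriv V t ≤ -γ * (M * V t ^ m + N * V t ^ n') ^ k) :
    ∀ t, T_s ≤ t → V t = 0 := by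
  have hp : 0 < n' - m := by
    have h1 : m < 1/k := by rw [lt_div_iff₀ hk]; linarith [mul_comm k m]
    have h2 : 1/k < n' := by rw [div_lt_iff₀ hk]; linarith [mul_comm k n']
    linarith
  have ha : 0 < (1 - k*m)/(n'-m) := div_pos (by linarith) hp
  have hb : 0 < (k*n'-1)/(n'-m) := div_pos (by linarith) hp
  have hγpos : 0 < γ := by
    rw [hγ]
    have h1 := Real.Gamma_pos_of_pos ha
    have h2 := Real.Gamma_pos_of_pos hb
    have h3 := Real.Gamma_pos_of_pos hk
    have h4 : (0:ℝ) < M ^ k := rpow_pos_of_pos hM k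
    have h5 : (0:ℝ) < (M/N) ^ ((1 - k*m)/(n'-m)) := rpow_pos_of_pos (div_pos hM hN) _
    positivity
  set f : ℝ → ℝ := fun z => ((M * z ^ m + N * z ^ n') ^ k)⁻¹ with hfdef
  have hfnn : ∀ z, 0 ≤ z → 0 ≤ f z := by
    intro z hz
    have : (0:ℝ) ≤ M * z ^ m + N * z ^ n' := by
      have := rpow_nonneg hz m
      have := rpow_nonneg hz n'
      positivity
    exact inv_nonneg.mpr (rpow_nonneg this k)
  have hfpos : ∀ z, 0 < z → 0 < f z := by
    intro z hz
    have h1 : (0:ℝ) < M * z ^ m + N * z ^ n' := by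
      have := rpow_pos_of_pos hz m
      have := rpow_pos_of_pos hz n'
      positivity
    exact inv_pos.mpr (rpow_pos_of_pos h1 k)
  have hcont : ∀ z : ℝ, 0 < z → ContinuousAt f z := by
    intro z hz
    have h1 : ContinuousAt (fun z : ℝ => M * z ^ m + N * z ^ n') z :=
      ((continuousAt_const.mul (Real.continuousAt_rpow_const z m (Or.inl hz.ne')))).add
        ((continuousAt_const.mul (Real.continuousAt_rpow_const z n' (Or.inl hz.ne'))))
    have h2 : (0:ℝ) < M * z ^ m + N * z ^ n' := by
      have := rpow_pos_of_pos hz m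
      have := rpow_pos_of_pos hz n'
      positivity
    exact (h1.rpow_const (Or.inr hk.le)).inv₀ (by positivity)
  have hInt : IntegrableOn f (Ioi (0:ℝ)) := by
    have h1 : IntegrableOn f (Ioc (0:ℝ) 1) := by
      have hg1 : IntegrableOn (fun z : ℝ => M ^ (-k) * z ^ (-(m*k))) (Ioc (0:ℝ) 1) := by
        refine (intervalIntegrable_iff_integrableOn_Ioc_of_le zero_le_one).mp ?_
        exact (intervalIntegral.intervalIntegrable_rpow' (by nlinarith)).const_mul _
      refine Integrable.mono hg1 ?_ ?_
      · exact (continuousOn_of_forall_continuousAt fun z hz =>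
          hcont z hz.1).aestronglyMeasurable measurableSet_Ioc
      · refine (ae_restrict_iff' measurableSet_Ioc).mpr (Filter.Eventually.of_forall ?_)
        intro z hz
        have hz0 : (0:ℝ) < z := hz.1
        have hle : (M * z ^ m) ^ k ≤ (M * z ^ m + N * z ^ n') ^ k := by
          refine rpow_le_rpow (by positivity) ?_ hk.le
          have : (0:ℝ) ≤ N * z ^ n' := by positivity
          linarith
        have hfle : f z ≤ ((M * z ^ m) ^ k)⁻¹ := by
          refine inv_anti₀ ?_ hle
          exact rpow_pos_of_pos (by positivity) k
        have hrw : ((M * z ^ m) ^ k)⁻¹ = M ^ (-k) * z ^ (-(m*k)) := by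
          rw [mul_rpow hM.le (rpow_nonneg hz0.le m), ← rpow_mul hz0.le, mul_inv,
            ← rpow_neg hM.le, ← rpow_neg hz0.le]
        rw [Real.norm_eq_abs, Real.norm_eq_abs, abs_of_nonneg (hfnn z hz0.le),
          abs_of_nonneg (by positivity)]
        rw [hrw] at hfle
        exact hfle
    have h2 : IntegrableOn f (Ioi (1:ℝ)) := by
      have hg2 : IntegrableOn (fun z : ℝ => N ^ (-k) * z ^ (-(n'*k))) (Ioi (1:ℝ)) := by
        exact (integrableOn_Ioi_rpow_of_lt (by nlinarith) one_pos).const_mul _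
      refine Integrable.mono hg2 ?_ ?_
      · exact (continuousOn_of_forall_continuousAt fun z hz =>
          hcont z (lt_trans one_pos hz)).aestronglyMeasurable measurableSet_Ioi
      · refine (ae_restrict_iff' measurableSet_Ioi).mpr (Filter.Eventually.of_forall ?_)
        intro z hz
        have hz0 : (0:ℝ) < z := lt_trans one_pos hz
        have hle : (N * z ^ n') ^ k ≤ (M * z ^ m + N * z ^ n') ^ k := by
          refine rpow_le_rpow (by positivity) ?_ hk.le
          have : (0:ℝ) ≤ M * z ^ m := by positivity
          linarith
        have hfle : f z ≤ ((N * z ^ n') ^ k)⁻¹ := by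
          refine inv_anti₀ ?_ hle
          exact rpow_pos_of_pos (by positivity) k
        have hrw : ((N * z ^ n') ^ k)⁻¹ = N ^ (-k) * z ^ (-(n'*k)) := by
          rw [mul_rpow hN.le (rpow_nonneg hz0.le n'), ← rpow_mul hz0.le, mul_inv,
            ← rpow_neg hN.le, ← rpow_neg hz0.le]
        rw [Real.norm_eq_abs, Real.norm_eq_abs, abs_of_nonneg (hfnn z hz0.le),
          abs_of_nonneg (by positivity)]
        rw [hrw] at hfle
        exact hfle
    rw [← Ioc_union_Ioi_eq_Ioi (zero_le_one)]
    exact h1.union h2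
  have hII : ∀ v : ℝ, 0 ≤ v → IntervalIntegrable f volume 0 v := by
    intro v hv
    refine (intervalIntegrable_iff_integrableOn_Ioc_of_le hv).mpr ?_
    exact hInt.mono_set (fun x hx => hx.1)
  set G : ℝ → ℝ := fun v => ∫ z in (0:ℝ)..v, f z with hGdef
  have hGderiv : ∀ v : ℝ, 0 < v → HasDerivAt G (f v) v := by
    intro v hv
    exact intervalIntegral.integral_hasDerivAt_right (hII v hv.le)
      (ContinuousAt.stronglyMeasurableAtFilter isOpen_Ioi (fun z hz => hcont z hz) v hv)
      (hcont v hv)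
  have hGpos : ∀ v : ℝ, 0 < v → 0 < G v := by
    intro v hv
    exact intervalIntegral.intervalIntegral_pos_of_pos_on (hII v hv.le)
      (fun z hz => hfpos z hz.1) hv
  have hγT : ∫ z in Ioi (0:ℝ), f z = γ * T_s := by
    rw [hfdef, main_integral M N m n' k hM hN hm hn' hk hkm hkn, hγ]
    have h3 := (Real.Gamma_pos_of_pos hk).ne'
    have h4 : (M:ℝ) ^ k ≠ 0 := (rpow_pos_of_pos hM k).ne'
    field_simp
  have hGle : ∀ v : ℝ, 0 ≤ v → G v ≤ γ * T_s := by
    intro v hv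
    rw [hGdef]
    simp only
    rw [intervalIntegral.integral_of_le hv, ← hγT]
    refine setIntegral_mono_set hInt ?_ ?_
    · exact (ae_restrict_iff' measurableSet_Ioi).mpr
        (Filter.Eventually.of_forall fun z hz => hfnn z (le_of_lt hz))
    · exact HasSubset.Subset.eventuallyLE (fun x hx => hx.1)
  -- Step 1: V vanishes somewhere on [0, T_s]
  have step1 : ∃ t₀ ∈ Icc (0:ℝ) T_s, V t₀ = 0 := by
    by_contra hcon
    push_neg at hcon
    have hVpos : ∀ u ∈ Icc (0:ℝ) T_s, 0 < V u :=
      fun u hu => (hVnn u).lt_of_ne' (hcon u hu)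
    set h : ℝ → ℝ := fun u => G (V u) + γ * u with hhdef
    have hderivh : ∀ u ∈ Ioo (0:ℝ) T_s, HasDerivAt h (f (V u) * deriv V u + γ) u := by
      intro u hu
      have h1 : HasDerivAt (fun u => G (V u)) (f (V u) * deriv V u) u :=
        (hGderiv (V u) (hVpos u (Ioo_subset_Icc_self hu))).comp u (hdiff u).hasDerivAt
      have h2 : HasDerivAt (fun u : ℝ => γ * u) γ u := by
        simpa using (hasDerivAt_id u).const_mul γ
      exact h1.add h2
    have hanti : AntitoneOn h (Icc (0:ℝ) T_s) := by
      refine antitoneOn_of_deriv_nonpos (convex_Icc 0 T_s) ?_ ?_ ?_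
      · intro u hu
        have h1 : ContinuousAt (fun u => G (V u)) u :=
          ((hGderiv (V u) (hVpos u hu)).continuousAt).comp hdiff.continuous.continuousAt
        exact (h1.add (continuousAt_const.mul continuousAt_id)).continuousWithinAt
      · intro u hu
        rw [interior_Icc] at hu
        exact (hderivh u hu).differentiableAt.differentiableWithinAt
      · intro u hu
        rw [interior_Icc] at hu
        rw [(hderivh u hu).deriv]
        have hVu : 0 < V u := hVpos u (Ioo_subset_Icc_self hu)
        have hfVu : 0 < f (V u) := hfpos (V u) hVu
        have hI := hineq u hu.1.le hVu
        have hkey : f (V u) * deriv V u ≤ -γ := by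
          calc f (V u) * deriv V u ≤ f (V u) * (-γ * (M * V u ^ m + N * V u ^ n') ^ k) :=
                mul_le_mul_of_nonneg_left hI hfVu.le
            _ = -γ * (f (V u) * (M * V u ^ m + N * V u ^ n') ^ k) := by ring
            _ = -γ := by
                rw [hfdef]
                simp only
                rw [inv_mul_cancel₀]
                · ring
                · have h1 : (0:ℝ) < M * V u ^ m + N * V u ^ n' := by
                    have := rpow_pos_of_pos hVu m
                    have := rpow_pos_of_pos hVu n'
                    positivity
                  exact (rpow_pos_of_pos h1 k).ne'
        linarith
    have h1 := hanti (left_mem_Icc.mpr hT.le) (right_mem_Icc.mpr hT.le) hT.le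
    have h2 : 0 < G (V T_s) := hGpos (V T_s) (hVpos T_s (right_mem_Icc.mpr hT.le))
    have h3 : G (V 0) ≤ γ * T_s := hGle (V 0) (hVnn 0)
    have h4 : h T_s = G (V T_s) + γ * T_s := rfl
    have h5 : h 0 = G (V 0) + γ * 0 := rfl
    rw [h4, h5] at h1
    linarith
  obtain ⟨t₀, ht₀, hVt₀⟩ := step1
  -- Step 2: once zero, always zero
  intro t ht
  by_contra hne
  have hVt : 0 < V t := (hVnn t).lt_of_ne' hne
  have ht₀t : t₀ ≤ t := le_trans ht₀.2 ht
  set S : Set ℝ := Icc t₀ t ∩ {u | V u = 0} with hSdef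
  have hSne : S.Nonempty := ⟨t₀, ⟨le_refl _, ht₀t⟩, hVt₀⟩
  have hSbdd : BddAbove S := ⟨t, fun u hu => hu.1.2⟩
  have hSclosed : IsClosed S :=
    isClosed_Icc.inter (isClosed_singleton.preimage hdiff.continuous)
  set s := sSup S with hsdef
  have hsS : s ∈ S := hSclosed.csSup_mem hSne hSbdd
  have hVs : V s = 0 := hsS.2
  have hst : s < t := lt_of_le_of_ne hsS.1.2 (fun h => hne (by rw [← h]; exact hVs))
  have hs0 : 0 ≤ s := le_trans ht₀.1 hsS.1.1
  have hpos : ∀ u, s < u → u ≤ t → 0 < V u := by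
    intro u hsu hut
    rcases ((hVnn u).lt_or_eq) with h | h
    · exact h
    · exfalso
      have huS : u ∈ S := ⟨⟨le_trans hsS.1.1 hsu.le, hut⟩, h.symm⟩
      exact absurd (le_csSup hSbdd huS) (not_le.mpr hsu)
  have hanti2 : AntitoneOn V (Icc s t) := by
    refine antitoneOn_of_deriv_nonpos (convex_Icc s t) hdiff.continuous.continuousOn
      (hdiff.differentiableOn) ?_
    intro u hu
    rw [interior_Icc] at hu
    have hVu : 0 < V u := hpos u hu.1 hu.2.le
    have hu0 : (0:ℝ) ≤ u := le_trans hs0 hu.1.le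
    have hI := hineq u hu0 hVu
    have hnn : (0:ℝ) ≤ (M * V u ^ m + N * V u ^ n') ^ k := by
      have h1 : (0:ℝ) ≤ M * V u ^ m + N * V u ^ n' := by
        have := rpow_nonneg (hVnn u) m
        have := rpow_nonneg (hVnn u) n'
        positivity
      exact rpow_nonneg h1 k
    nlinarith
  have hfin := hanti2 (left_mem_Icc.mpr hst.le) (right_mem_Icc.mpr hst.le) hst.le
  rw [hVs] at hfin
  linarith
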